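/- The linear map φ : 𝒮̄^{1/2} → 𝒮̄⁰ defined on basis elements by L_m ↦ (1/2)L_{2m}, W_m ↦ W_{2m}, G_{m+1/2} ↦ (1/√2)G_{2m+1} is an injective homomorphism of Lie superalgebras. -/

import Mathlib

/-- Basis of the Ramond-type algebra 𝒮̄⁰: `L m`, `W m` even, `G m` odd, `m ∈ ℤ`. -/
inductive B0 : Type
  | L : ℤ → B0
  | W : ℤ → B0
  | G : ℤ → B0
  deriving DecidableEq

/-- Basis of the Neveu–Schwarz-type algebra 𝒮̄^{1/2}: here `G n` stands for `G_{n+1/2}`. -/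
inductive Bh : Type
  | L : ℤ → Bh
  | W : ℤ → Bh
  | G : ℤ → Bh
  deriving DecidableEq

open B0 in
/-- The bracket of 𝒮̄⁰ on basis elements. -/
noncomputable def br0 : B0 → B0 → (B0 →₀ ℂ)
  | L m, L n => Finsupp.single (L (m + n)) ((n : ℂ) - m)
  | L m, W n => Finsupp.single (W (m + n)) ((m : ℂ) + n)
  | W n, L m => -Finsupp.single (W (m + n)) ((m : ℂ) + n)
  | L m, G n => Finsupp.single (G (m + n)) (n : ℂ)
  | G n, L m => -Finsupp.single (G (m + n)) (n : ℂ)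
  | G m, G n => Finsupp.single (W (m + n)) ((m : ℂ) + n)
  | _, _ => 0

open Bh in
/-- The bracket of 𝒮̄^{1/2} on basis elements (`G n` = `G_{n+1/2}`). -/
noncomputable def brh : Bh → Bh → (Bh →₀ ℂ)
  | L m, L n => Finsupp.single (L (m + n)) ((n : ℂ) - m)
  | L m, W n => Finsupp.single (W (m + n)) ((m : ℂ) + n)
  | W n, L m => -Finsupp.single (W (m + n)) ((m : ℂ) + n)
  | L m, G n => Finsupp.single (G (m + n)) ((n : ℂ) + 1/2)
  | G n, L m => -Finsupp.single (G (m + n)) ((n : ℂ) + 1/2)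
  | G m, G n => Finsupp.single (W (m + n + 1)) ((m : ℂ) + n + 1)
  | _, _ => 0

/-- Bilinear extension of a basis-valued bracket to the whole free module. -/
noncomputable def bil {B : Type} (f : B → B → (B →₀ ℂ)) (v w : B →₀ ℂ) : B →₀ ℂ :=
  v.sum fun a c => w.sum fun b d => (c * d) • f a b

open B0 Bh in
/-- The map φ on basis elements: `L_m ↦ (1/2)L_{2m}`, `W_m ↦ W_{2m}`,
`G_{m+1/2} ↦ (1/√2) G_{2m+1}`. -/
noncomputable def phib : Bh → (B0 →₀ ℂ)
  | Bh.L m => Finsupp.single (B0.L (2 * m)) (1/2 : ℂ)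
  | Bh.W m => Finsupp.single (B0.W (2 * m)) 1
  | Bh.G m => Finsupp.single (B0.G (2 * m + 1)) ((Real.sqrt 2 : ℂ))⁻¹

/-- The linear extension Φ : 𝒮̄^{1/2} → 𝒮̄⁰ of φ. -/
noncomputable def Phi (v : Bh →₀ ℂ) : B0 →₀ ℂ := v.sum fun b c => c • phib b


lemma bil_zero_left {B : Type} (f : B → B → (B →₀ ℂ)) (w : B →₀ ℂ) : bil f 0 w = 0 := by
  simp [bil]

lemma bil_zero_right {B : Type} (f : B → B → (B →₀ ℂ)) (v : B →₀ ℂ) : bil f v 0 = 0 := by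
  simp [bil]

lemma bil_add_left {B : Type} (f : B → B → (B →₀ ℂ)) (v v' w : B →₀ ℂ) :
    bil f (v + v') w = bil f v w + bil f v' w := by
  unfold bil
  apply Finsupp.sum_add_index' <;> intros <;> simp [add_mul, add_smul, Finsupp.sum_add]

lemma bil_add_right {B : Type} (f : B → B → (B →₀ ℂ)) (v w w' : B →₀ ℂ) :
    bil f v (w + w') = bil f v w + bil f v w' := by
  unfold bil
  rw [← Finsupp.sum_add]
  apply Finsupp.sum_congr
  intros
  apply Finsupp.sum_add_index' <;> intros <;> simp [mul_add, add_smul]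

lemma bil_single_single {B : Type} (f : B → B → (B →₀ ℂ)) (a b : B) (c d : ℂ) :
    bil f (Finsupp.single a c) (Finsupp.single b d) = (c * d) • f a b := by
  unfold bil
  rw [Finsupp.sum_single_index, Finsupp.sum_single_index] <;> simp

lemma bil_smul_left {B : Type} (f : B → B → (B →₀ ℂ)) (c : ℂ) (v w : B →₀ ℂ) :
    bil f (c • v) w = c • bil f v w := by
  unfold bil
  rw [Finsupp.sum_smul_index'] ; swap
  · intros; simp
  rw [Finsupp.smul_sum]
  apply Finsupp.sum_congr; intros a _
  rw [Finsupp.smul_sum]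
  apply Finsupp.sum_congr; intros b _
  simp only [smul_smul, smul_eq_mul]; ring_nf

lemma bil_smul_right {B : Type} (f : B → B → (B →₀ ℂ)) (c : ℂ) (v w : B →₀ ℂ) :
    bil f v (c • w) = c • bil f v w := by
  unfold bil
  rw [Finsupp.smul_sum]
  apply Finsupp.sum_congr; intros a ca
  rw [Finsupp.sum_smul_index'] ; swap
  · intros; simp
  rw [Finsupp.smul_sum]
  apply Finsupp.sum_congr; intros b _
  simp only [smul_smul, smul_eq_mul]; ring_nf

lemma Phi_zero : Phi 0 = 0 := by simp [Phi]

lemma Phi_add (v w : Bh →₀ ℂ) : Phi (v + w) = Phi v + Phi w := by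
  unfold Phi
  apply Finsupp.sum_add_index' <;> intros <;> simp [add_smul]

lemma Phi_smul (c : ℂ) (v : Bh →₀ ℂ) : Phi (c • v) = c • Phi v := by
  unfold Phi
  rw [Finsupp.sum_smul_index'] ; swap
  · intros; simp
  rw [Finsupp.smul_sum]
  apply Finsupp.sum_congr; intros a _
  simp [smul_smul]

lemma Phi_single (b : Bh) (c : ℂ) : Phi (Finsupp.single b c) = c • phib b := by
  unfold Phi
  rw [Finsupp.sum_single_index]
  simp

lemma sqrt2_mul : ((Real.sqrt 2 : ℂ))⁻¹ * ((Real.sqrt 2 : ℂ))⁻¹ = 1/2 := by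
  rw [← mul_inv]
  norm_cast
  rw [Real.mul_self_sqrt (by norm_num)]
  norm_num

lemma Phi_key (a b : Bh) : Phi (brh a b) = bil br0 (phib a) (phib b) := by
  cases a <;> cases b <;>
    simp only [brh, phib, br0, bil_single_single, ← Finsupp.single_neg, Phi_single,
      Finsupp.smul_single, smul_eq_mul, smul_zero, Phi_zero] <;>
  first
  | rfl
  | (congr 1
     · ring_nf
     · push_cast; ring)
  | (congr 1
     · ring_nf
     · rw [sqrt2_mul]; push_cast; ring)

lemma Phi_hom (v w : Bh →₀ ℂ) : Phi (bil brh v w) = bil br0 (Phi v) (Phi w) := by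
  induction v using Finsupp.induction_linear with
  | zero => simp [bil_zero_left, Phi_zero]
  | add v v' hv hv' => simp [bil_add_left, Phi_add, hv, hv']
  | single a c =>
    induction w using Finsupp.induction_linear with
    | zero => simp [bil_zero_right, Phi_zero]
    | add w w' hw hw' => simp [bil_add_right, Phi_add, hw, hw']
    | single b d =>
      rw [bil_single_single, Phi_smul, Phi_key, Phi_single, Phi_single,
        bil_smul_left, bil_smul_right, smul_smul]

def eb : Bh → B0
  | Bh.L m => B0.L (2 * m)
  | Bh.W m => B0.W (2 * m)
  | Bh.G m => B0.G (2 * m + 1)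

noncomputable def kk : Bh → ℂ
  | Bh.L _ => 1/2
  | Bh.W _ => 1
  | Bh.G _ => ((Real.sqrt 2 : ℂ))⁻¹

lemma phib_eq (b : Bh) : phib b = Finsupp.single (eb b) (kk b) := by
  cases b <;> rfl

lemma eb_inj : Function.Injective eb := by
  intro a b h
  cases a <;> cases b <;> simp [eb] at h ⊢ <;> omega

lemma kk_ne (b : Bh) : kk b ≠ 0 := by
  cases b <;> simp [kk]

lemma Phi_apply (v : Bh →₀ ℂ) (b : Bh) : Phi v (eb b) = kk b * v b := by
  unfold Phi
  rw [Finsupp.sum_apply, Finsupp.sum_eq_single b]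
  · rw [phib_eq]; simp [mul_comm]
  · intro a _ hab
    rw [phib_eq, Finsupp.smul_apply, Finsupp.single_apply,
      if_neg (fun h => hab (eb_inj h))]
    simp
  · intro _; simp

/-- φ is an injective homomorphism of Lie superalgebras. -/
theorem stmt6 :
    Function.Injective Phi ∧ ∀ v w : Bh →₀ ℂ, Phi (bil brh v w) = bil br0 (Phi v) (Phi w) := by
  constructor
  · intro v w h
    ext b
    have := DFunLike.congr_fun h (eb b)
    rw [Phi_apply, Phi_apply] at this
    exact mul_left_cancel₀ (kk_ne b) this
  · exact Phi_hom
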